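/- Let Γ_S > 0 and Γ_D > 1 + 1/Γ_S. Then the optimal power allocation ratio a* = (1/2)(1 − (1+Γ_S)/(Γ_S Γ_D)) satisfies 0 < a* < 1/2, and for every a ∈ [0,1] one has (1+Γ̃_D(a))/(1+Γ̃_U(a)) ≤ (1+Γ̃_D(a*))/(1+Γ̃_U(a*)); in particular a* maximizes the instantaneous secrecy rate C(a) over a ∈ [0,1]. -/

import Mathlib

/-- SINR at the untrusted UAV with power allocation ratio `a`. -/
noncomputable def sinrU (S a : ℝ) : ℝ := a * S / ((1 - a) * S + 1)

/-- SINR at the destination with power allocation ratio `a`. -/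
noncomputable def sinrD (S D a : ℝ) : ℝ := a * S * D / (S + D + 1)

/-- Instantaneous secrecy rate. -/
noncomputable def secrecyRate (S D a : ℝ) : ℝ :=
  max 0 (Real.log (1 + sinrD S D a) - Real.log (1 + sinrU S a))

/-- The optimal power allocation ratio. -/
noncomputable def aStar (S D : ℝ) : ℝ := (1 / 2) * (1 - (1 + S) / (S * D))

lemma one_add_sinrU (S a : ℝ) (h : (1 - a) * S + 1 > 0) :
    1 + sinrU S a = (S + 1) / ((1 - a) * S + 1) := by
  unfold sinrU
  rw [eq_div_iff h.ne', add_mul, div_mul_cancel₀ _ h.ne']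
  ring

lemma one_add_sinrD (S D a : ℝ) (h : S + D + 1 > 0) :
    1 + sinrD S D a = (S + D + 1 + a * S * D) / (S + D + 1) := by
  unfold sinrD
  field_simp

lemma ratio_eq (S D a : ℝ) (hu : (1 - a) * S + 1 > 0) (hd : S + D + 1 > 0) :
    (1 + sinrD S D a) / (1 + sinrU S a)
      = ((S + D + 1 + a * S * D) * ((1 - a) * S + 1)) / ((S + D + 1) * (S + 1)) := by
  rw [one_add_sinrU S a hu, one_add_sinrD S D a hd]
  rw [div_div_div_eq]

theorem stmt_1 (S D : ℝ) (hS : 0 < S) (hD : 1 + 1 / S < D) :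
    0 < aStar S D ∧ aStar S D < 1 / 2 ∧
    (∀ a ∈ Set.Icc (0 : ℝ) 1,
      (1 + sinrD S D a) / (1 + sinrU S a)
        ≤ (1 + sinrD S D (aStar S D)) / (1 + sinrU S (aStar S D))) ∧
    (∀ a ∈ Set.Icc (0 : ℝ) 1, secrecyRate S D a ≤ secrecyRate S D (aStar S D)) := by
  have hS1 : (0:ℝ) < 1 / S := by positivity
  have hD0 : (0:ℝ) < D := by linarith
  have hSD : S + 1 < S * D := by
    have h1 : S * (1 / S) = 1 := by field_simp
    nlinarith [mul_lt_mul_of_pos_left hD hS]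
  have hSD0 : (0:ℝ) < S * D := mul_pos hS hD0
  set A := aStar S D with hAdef
  have hAval : A = (S * D - S - 1) / (2 * (S * D)) := by
    rw [hAdef]; unfold aStar; field_simp; ring
  have hA0 : 0 < A := by
    rw [hAval]; apply div_pos (by linarith) (by linarith)
  have hAhalf : A < 1 / 2 := by
    rw [hAval, div_lt_iff₀ (by linarith : (0:ℝ) < 2 * (S * D))]
    nlinarith
  have hA1 : A < 1 := by linarith
  have hd : S + D + 1 > 0 := by linarith
  have huA : (1 - A) * S + 1 > 0 := by nlinarith
  -- key quadratic inequality
  have key : ∀ a : ℝ,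
      (S + D + 1 + a * S * D) * ((1 - a) * S + 1)
        ≤ (S + D + 1 + A * S * D) * ((1 - A) * S + 1) := by
    intro a
    have hid : (S + D + 1 + A * S * D) * ((1 - A) * S + 1)
        - (S + D + 1 + a * S * D) * ((1 - a) * S + 1) = S ^ 2 * D * (a - A) ^ 2 := by
      rw [hAval]; field_simp; ring
    nlinarith [sq_nonneg (a - A), sq_nonneg S, mul_nonneg (mul_nonneg (sq_nonneg S) hD0.le) (sq_nonneg (a - A))]
  have hC : (0:ℝ) < (S + D + 1) * (S + 1) := by nlinarith
  have ratio_le : ∀ a ∈ Set.Icc (0:ℝ) 1,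
      (1 + sinrD S D a) / (1 + sinrU S a)
        ≤ (1 + sinrD S D A) / (1 + sinrU S A) := by
    intro a ha
    obtain ⟨ha0, ha1⟩ := ha
    have hua : (1 - a) * S + 1 > 0 := by nlinarith
    rw [ratio_eq S D a hua hd, ratio_eq S D A huA hd]
    exact div_le_div_of_nonneg_right (key a) hC.le
  refine ⟨hA0, hAhalf, ratio_le, ?_⟩
  intro a ha
  obtain ⟨ha0, ha1⟩ := ha
  have hua : (1 - a) * S + 1 > 0 := by nlinarith
  have hposU : 0 < 1 + sinrU S a := by
    rw [one_add_sinrU S a hua]; positivity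
  have hposD : 0 < 1 + sinrD S D a := by
    rw [one_add_sinrD S D a hd]
    apply div_pos (by nlinarith) hd
  have hposUA : 0 < 1 + sinrU S A := by
    rw [one_add_sinrU S A huA]; positivity
  have hposDA : 0 < 1 + sinrD S D A := by
    rw [one_add_sinrD S D A hd]
    apply div_pos (by nlinarith) hd
  unfold secrecyRate
  apply max_le_max le_rfl
  rw [← Real.log_div hposD.ne' hposU.ne', ← Real.log_div hposDA.ne' hposUA.ne']
  apply Real.log_le_log (by positivity)
  exact ratio_le a ⟨ha0, ha1⟩
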